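/- Sinkhorn's theorem: let n, m ≥ 1, let K : Fin n → Fin m → ℝ have strictly positive entries, and let μ1 : Fin n → ℝ and μ2 : Fin m → ℝ have strictly positive entries with ∑_i μ1_i = ∑_j μ2_j = 1. Then there exist vectors u : Fin n → ℝ and v : Fin m → ℝ with strictly positive entries such that the matrix Q with Q_{ij} = u_i * K_{ij} * v_j satisfies ∀ i, ∑_j Q_{ij} = μ1_i and ∀ j, ∑_i Q_{ij} = μ2_j. -/

import Mathlib

open Finset

/-- Sinkhorn's theorem: for a strictly positive kernel `K : Fin n → Fin m → ℝ` and
strictly positive marginal vectors `μ1, μ2` each summing to 1, there exist strictly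
positive scaling vectors `u, v` such that `Q i j = u i * K i j * v j` has row sums
`μ1` and column sums `μ2`. -/
theorem sinkhorn_exists_scaling (n m : ℕ) (hn : 1 ≤ n) (hm : 1 ≤ m)
    (K : Fin n → Fin m → ℝ) (hK : ∀ i j, 0 < K i j)
    (μ1 : Fin n → ℝ) (hμ1 : ∀ i, 0 < μ1 i) (hμ1sum : ∑ i, μ1 i = 1)
    (μ2 : Fin m → ℝ) (hμ2 : ∀ j, 0 < μ2 j) (hμ2sum : ∑ j, μ2 j = 1) :
    ∃ (u : Fin n → ℝ) (v : Fin m → ℝ),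
      (∀ i, 0 < u i) ∧ (∀ j, 0 < v j) ∧
      (∀ i, ∑ j, u i * K i j * v j = μ1 i) ∧
      (∀ j, ∑ i, u i * K i j * v j = μ2 j) := by
  have hm' : 0 < m := hm
  have hn' : 0 < n := hn
  set j0 : Fin m := ⟨0, hm'⟩ with hj0def
  set i0 : Fin n := ⟨0, hn'⟩ with hi0def
  -- the row-sum function
  set r : (Fin m → ℝ) → Fin n → ℝ := fun y i => ∑ j, K i j * Real.exp (y j) with hrdef
  have hrpos : ∀ y i, 0 < r y i := fun y i =>
    Finset.sum_pos (fun j _ => mul_pos (hK i j) (Real.exp_pos _)) ⟨j0, Finset.mem_univ _⟩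
  -- the potential
  set f : (Fin m → ℝ) → ℝ :=
    fun y => (∑ i, μ1 i * Real.log (r y i)) - ∑ j, μ2 j * y j with hfdef
  have hfc : Continuous f := by
    apply Continuous.sub
    · apply continuous_finset_sum
      intro i _
      apply Continuous.mul continuous_const
      apply Continuous.log
      · exact continuous_finset_sum _ fun j _ =>
          continuous_const.mul (Real.continuous_exp.comp (continuous_apply j))
      · exact fun y => (hrpos y i).ne'
    · exact continuous_finset_sum _ fun j _ => continuous_const.mul (continuous_apply j)
  -- minimal entries
  obtain ⟨⟨iK, jK⟩, -, hKmin⟩ := Finset.exists_min_image (univ : Finset (Fin n × Fin m))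
    (fun p => K p.1 p.2) ⟨(i0, j0), Finset.mem_univ _⟩
  set ε : ℝ := K iK jK with hεdef
  have hε : 0 < ε := hK _ _
  obtain ⟨jμ, -, hμmin⟩ := Finset.exists_min_image (univ : Finset (Fin m)) μ2
    ⟨j0, Finset.mem_univ _⟩
  set μmin : ℝ := μ2 jμ with hμmindef
  have hμminpos : 0 < μmin := hμ2 _
  -- coercivity bound: on the set S, sup-norm is bounded
  haveI : Nonempty (Fin m) := ⟨j0⟩
  haveI : Nonempty (Fin n) := ⟨i0⟩
  set B : ℝ := f 0 - Real.log ε with hBdef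
  set S : Set (Fin m → ℝ) := {y | y j0 = 0 ∧ f y ≤ f 0} with hSdef
  have key : ∀ y ∈ S, ∀ j : Fin m,
      μ2 j * ((Finset.univ.sup' Finset.univ_nonempty y) - y j) ≤ B := by
    intro y hyS j
    set M : ℝ := Finset.univ.sup' Finset.univ_nonempty y with hMdef
    obtain ⟨js, -, hjs⟩ := Finset.exists_mem_eq_sup' Finset.univ_nonempty y
    have hle : ∀ j' : Fin m, y j' ≤ M := fun j' => Finset.le_sup' y (Finset.mem_univ j')
    have hlog : ∀ i, Real.log ε + M ≤ Real.log (r y i) := by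
      intro i
      have h1 : ε * Real.exp M ≤ r y i := by
        have h2 : ε * Real.exp M ≤ K i js * Real.exp (y js) := by
          rw [← hjs]
          exact mul_le_mul_of_nonneg_right (hKmin (i, js) (Finset.mem_univ _))
            (Real.exp_pos _).le
        refine h2.trans ?_
        exact Finset.single_le_sum
          (fun j' _ => (mul_pos (hK i j') (Real.exp_pos _)).le) (Finset.mem_univ js)
      calc Real.log ε + M = Real.log (ε * Real.exp M) := by
              rw [Real.log_mul hε.ne' (Real.exp_pos _).ne', Real.log_exp]
        _ ≤ Real.log (r y i) := Real.log_le_log (mul_pos hε (Real.exp_pos _)) h1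
    have hsum : Real.log ε + M - ∑ j', μ2 j' * y j' ≤ f y := by
      have : Real.log ε + M = ∑ i, μ1 i * (Real.log ε + M) := by
        rw [← Finset.sum_mul, hμ1sum, one_mul]
      rw [hfdef]
      simp only
      rw [this]
      have h3 : ∑ i, μ1 i * (Real.log ε + M) ≤ ∑ i, μ1 i * Real.log (r y i) :=
        Finset.sum_le_sum fun i _ =>
          mul_le_mul_of_nonneg_left (hlog i) (hμ1 i).le
      linarith
    have hfy : f y ≤ f 0 := hyS.2
    have hMsum : M - ∑ j', μ2 j' * y j' ≤ B := by
      rw [hBdef]; linarith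
    have h4 : μ2 j * (M - y j) ≤ ∑ j', μ2 j' * (M - y j') :=
      Finset.single_le_sum
        (fun j' _ => mul_nonneg (hμ2 j').le (sub_nonneg.2 (hle j'))) (Finset.mem_univ j)
    have h5 : ∑ j', μ2 j' * (M - y j') = M - ∑ j', μ2 j' * y j' := by
      simp only [mul_sub]
      rw [Finset.sum_sub_distrib, ← Finset.sum_mul, hμ2sum, one_mul]
    linarith
  have hSbdd : ∀ y ∈ S, ‖y‖ ≤ max (B / μmin) 0 := by
    intro y hyS
    set M : ℝ := Finset.univ.sup' Finset.univ_nonempty y with hMdef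
    have hle : ∀ j' : Fin m, y j' ≤ M := fun j' => Finset.le_sup' y (Finset.mem_univ j')
    have hMy : ∀ j : Fin m, M - y j ≤ B / μmin := by
      intro j
      rw [le_div_iff₀ hμminpos]
      calc (M - y j) * μmin ≤ (M - y j) * μ2 j :=
            mul_le_mul_of_nonneg_left (hμmin j (Finset.mem_univ j))
              (sub_nonneg.2 (hle j))
        _ = μ2 j * (M - y j) := mul_comm _ _
        _ ≤ B := key y hyS j
    have hM0 : 0 ≤ M := by have := hle j0; rw [hyS.1] at this; exact this
    have hMub : M ≤ B / μmin := by
      have := hMy j0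
      rw [hyS.1] at this
      linarith
    rw [pi_norm_le_iff_of_nonneg (le_max_right _ _)]
    intro j
    rw [Real.norm_eq_abs, abs_le]
    constructor
    · have := hMy j
      have h2 : -(B / μmin) ≤ y j := by linarith
      exact le_trans (neg_le_neg (le_max_left _ _)) h2
    · exact le_trans ((hle j).trans hMub) (le_max_left _ _)
  have hScompact : IsCompact S := by
    have hclosed : IsClosed S := by
      apply IsClosed.inter
      · exact isClosed_eq (continuous_apply j0) continuous_const
      · exact isClosed_le hfc continuous_const
    apply Metric.isCompact_of_isClosed_isBounded hclosed
    apply isBounded_iff_forall_norm_le.2 ⟨max (B / μmin) 0, hSbdd⟩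
  have hS0 : (0 : Fin m → ℝ) ∈ S := ⟨rfl, le_refl _⟩
  obtain ⟨y, hyS, hymin⟩ := hScompact.exists_isMinOn ⟨0, hS0⟩ hfc.continuousOn
  -- y is a global min over {y | y j0 = 0}
  have hglobal : ∀ z : Fin m → ℝ, z j0 = 0 → f y ≤ f z := by
    intro z hz
    by_cases h : f z ≤ f 0
    · exact hymin ⟨hz, h⟩
    · exact le_trans (hymin hS0) (le_of_not_ge h)
  -- first-order conditions at y for j ≠ j0
  have grad : ∀ j : Fin m, j ≠ j0 →
      ∑ i, μ1 i * (K i j * Real.exp (y j) / r y i) = μ2 j := by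
    intro j hj
    set a : Fin n → ℝ := fun i => ∑ j' ∈ Finset.univ.erase j, K i j' * Real.exp (y j')
      with hadef
    set b : Fin n → ℝ := fun i => K i j * Real.exp (y j) with hbdef
    have hb : ∀ i, 0 < b i := fun i => mul_pos (hK i j) (Real.exp_pos _)
    have ha : ∀ i, 0 ≤ a i := fun i => Finset.sum_nonneg fun j' _ =>
      (mul_pos (hK i j') (Real.exp_pos _)).le
    set e : Fin m → ℝ := Pi.single j 1 with hedef
    have hab : ∀ i, a i + b i = r y i := by
      intro i
      rw [hrdef]
      simp only
      rw [← Finset.add_sum_erase _ _ (Finset.mem_univ j)]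
      rw [add_comm]
    have habt : ∀ i t, 0 < a i + b i * Real.exp t := fun i t =>
      add_pos_of_nonneg_of_pos (ha i) (mul_pos (hb i) (Real.exp_pos _))
    have hpoint : ∀ (t : ℝ) (i : Fin n),
        r (y + t • e) i = a i + b i * Real.exp t := by
      intro t i
      rw [hrdef]
      simp only
      rw [← Finset.add_sum_erase _
        (fun j' => K i j' * Real.exp ((y + t • e) j')) (Finset.mem_univ j)]
      have h1 : (y + t • e) j = y j + t := by
        simp [hedef, Pi.single_eq_same]
      have h2 : ∀ j' ∈ Finset.univ.erase j,
          K i j' * Real.exp ((y + t • e) j') = K i j' * Real.exp (y j') := by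
        intro j' hj'
        have : (y + t • e) j' = y j' := by
          simp [hedef, Pi.single_eq_of_ne (Finset.ne_of_mem_erase hj')]
        rw [this]
      rw [Finset.sum_congr rfl h2, h1, Real.exp_add]
      ring
    have hlin : ∀ t : ℝ, ∑ j', μ2 j' * (y + t • e) j'
        = (∑ j', μ2 j' * y j') + μ2 j * t := by
      intro t
      rw [← Finset.add_sum_erase _
        (fun j' => μ2 j' * (y + t • e) j') (Finset.mem_univ j),
        ← Finset.add_sum_erase _ (fun j' => μ2 j' * y j') (Finset.mem_univ j)]
      have h1 : (y + t • e) j = y j + t := by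
        simp [hedef, Pi.single_eq_same]
      have h2 : ∀ j' ∈ Finset.univ.erase j,
          μ2 j' * (y + t • e) j' = μ2 j' * y j' := by
        intro j' hj'
        have : (y + t • e) j' = y j' := by
          simp [hedef, Pi.single_eq_of_ne (Finset.ne_of_mem_erase hj')]
        rw [this]
      rw [Finset.sum_congr rfl h2, h1]
      ring
    set φ : ℝ → ℝ := fun t =>
      (∑ i, μ1 i * Real.log (a i + b i * Real.exp t))
        - ((∑ j', μ2 j' * y j') + μ2 j * t) with hφdef
    have hφf : ∀ t, φ t = f (y + t • e) := by
      intro t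
      rw [hφdef, hfdef]
      simp only
      rw [hlin t]
      congr 1
      exact Finset.sum_congr rfl fun i _ => by rw [hpoint t i]
    have hmin0 : ∀ t, φ 0 ≤ φ t := by
      intro t
      rw [hφf, hφf]
      have h0 : y + (0 : ℝ) • e = y := by simp
      rw [h0]
      apply hglobal
      have hj0ne : j0 ≠ j := Ne.symm hj
      simp [hedef, Pi.single_eq_of_ne hj0ne, hyS.1]
    have hloc : IsLocalMin φ 0 := Filter.Eventually.of_forall hmin0
    have hder : HasDerivAt φ
        ((∑ i, μ1 i * (b i * Real.exp 0 / (a i + b i * Real.exp 0))) - μ2 j) 0 := by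
      apply HasDerivAt.sub
      · apply HasDerivAt.fun_sum
        intro i _
        exact ((((Real.hasDerivAt_exp 0).const_mul (b i)).const_add (a i)).log
          (habt i 0).ne').const_mul (μ1 i)
      · have h := ((hasDerivAt_id (0 : ℝ)).const_mul (μ2 j)).const_add
          (∑ j', μ2 j' * y j')
        simpa using h
    have h0 : (∑ i, μ1 i * (b i * Real.exp 0 / (a i + b i * Real.exp 0))) - μ2 j = 0 := by
      rw [← hder.deriv]
      exact hloc.deriv_eq_zero
    have h1 := sub_eq_zero.mp h0
    simp only [Real.exp_zero, mul_one] at h1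
    simp only [hab] at h1
    exact h1
  -- construct the scalings
  refine ⟨fun i => μ1 i / r y i, fun j => Real.exp (y j),
    fun i => div_pos (hμ1 i) (hrpos y i), fun j => Real.exp_pos _, ?_, ?_⟩
  · intro i
    have : ∑ j, μ1 i / r y i * K i j * Real.exp (y j)
        = μ1 i / r y i * r y i := by
      rw [Finset.mul_sum]; exact Finset.sum_congr rfl fun j _ => by ring
    rw [this, div_mul_cancel₀ _ (hrpos y i).ne']
  · have hcol : ∀ j : Fin m, j ≠ j0 →
        ∑ i, μ1 i / r y i * K i j * Real.exp (y j) = μ2 j := by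
      intro j hj
      rw [← grad j hj]
      exact Finset.sum_congr rfl fun i _ => by
        field_simp
    intro j
    by_cases hj : j = j0
    · subst hj
      have htot : ∑ j, ∑ i, μ1 i / r y i * K i j * Real.exp (y j) = 1 := by
        rw [Finset.sum_comm]
        rw [← hμ1sum]
        apply Finset.sum_congr rfl
        intro i _
        have : ∑ j, μ1 i / r y i * K i j * Real.exp (y j)
            = μ1 i / r y i * r y i := by
          rw [Finset.mul_sum]; exact Finset.sum_congr rfl fun j _ => by ring
        rw [this, div_mul_cancel₀ _ (hrpos y i).ne']
      have h1 : ∑ j, ∑ i, μ1 i / r y i * K i j * Real.exp (y j)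
          = (∑ i, μ1 i / r y i * K i j0 * Real.exp (y j0))
            + ∑ j ∈ Finset.univ.erase j0, μ2 j := by
        rw [← Finset.add_sum_erase _ _ (Finset.mem_univ j0)]
        congr 1
        exact Finset.sum_congr rfl fun j hj => hcol j (Finset.ne_of_mem_erase hj)
      have h2 : (1 : ℝ) = μ2 j0 + ∑ j ∈ Finset.univ.erase j0, μ2 j := by
        rw [← hμ2sum, Finset.add_sum_erase _ _ (Finset.mem_univ j0)]
      rw [htot, h2] at h1
      linarith
    · exact hcol j hj
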